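/- arXiv:1412.1725 — 8 statements merged into one kernel-verified Lean document; each statement's English description precedes it below -/
import Mathlib

section
/- Let ω, N, R : ℝ → ℝ be differentiable at r₀, with N(r₀) > 0, R(r₀) > 0, N'(r₀) ≥ 0, ω'(r₀) < 0, and let L < 0, m ∈ ℝ, E ∈ ℝ satisfy the circular-orbit relation E − ω(r₀)L = N(r₀)·√(m² + L²/R(r₀)²). Define Z²(r) = (E − ω(r)L)² − N(r)²·(m² + L²/R(r)²) and χ(r) = ω(r) − N(r)/R(r). Then (1/2)·(Z²)'(r₀) ≤ L²·(N(r₀)/R(r₀))·χ'(r₀). -/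
/-- On a circular orbit with L < 0, ω' < 0, N' ≥ 0:
(1/2)(Z²)' ≤ L² (N/R) χ', where χ = ω - N/R. -/
theorem deriv_Zsq_le_chi
    (ω N R : ℝ → ℝ) (r₀ E L m : ℝ)
    (hω : DifferentiableAt ℝ ω r₀) (hN : DifferentiableAt ℝ N r₀)
    (hR : DifferentiableAt ℝ R r₀)
    (hN0 : 0 < N r₀) (hR0 : 0 < R r₀)
    (hN' : 0 ≤ deriv N r₀) (hω' : deriv ω r₀ < 0) (hL : L < 0)
    (hcirc : E - ω r₀ * L = N r₀ * Real.sqrt (m^2 + L^2 / (R r₀)^2)) :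
    (1/2) * deriv (fun r => (E - ω r * L)^2 - (N r)^2 * (m^2 + L^2 / (R r)^2)) r₀
      ≤ L^2 * (N r₀ / R r₀) * deriv (fun r => ω r - N r / R r) r₀ := by
  have hR0' : R r₀ ≠ 0 := ne_of_gt hR0
  set s : ℝ := Real.sqrt (m^2 + L^2 / (R r₀)^2) with hs
  have harg : 0 ≤ m^2 + L^2 / (R r₀)^2 := by positivity
  have hs2 : s^2 = m^2 + L^2 / (R r₀)^2 := Real.sq_sqrt harg
  have hs0 : 0 ≤ s := Real.sqrt_nonneg _
  have hsL : -L / R r₀ ≤ s := by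
    have h1 : Real.sqrt (L^2 / (R r₀)^2) ≤ s := by
      apply Real.sqrt_le_sqrt; nlinarith [sq_nonneg m]
    rwa [show L^2 / (R r₀)^2 = (-L / R r₀)^2 by ring,
      Real.sqrt_sq (div_nonneg (neg_nonneg.2 hL.le) hR0.le)] at h1
  have hωd := hω.hasDerivAt
  have hNd := hN.hasDerivAt
  have hRd := hR.hasDerivAt
  -- derivative of first function
  have hX : HasDerivAt (fun r => E - ω r * L) (0 - deriv ω r₀ * L) r₀ :=
    (hasDerivAt_const r₀ E).sub (hωd.mul_const L)
  have hinv : HasDerivAt (fun r => m^2 + L^2 / (R r)^2)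
      (0 + (0 * (R r₀)^2 - L^2 * (2 * R r₀ ^ 1 * deriv R r₀)) / ((R r₀)^2)^2) r₀ :=
    (hasDerivAt_const r₀ (m^2)).add
      ((hasDerivAt_const r₀ (L^2)).div (hRd.pow 2) (pow_ne_zero 2 hR0'))
  have hf : HasDerivAt (fun r => (E - ω r * L)^2 - (N r)^2 * (m^2 + L^2 / (R r)^2))
      (2 * (E - ω r₀ * L) ^ 1 * (0 - deriv ω r₀ * L) -
        ((2 * N r₀ ^ 1 * deriv N r₀) * (m^2 + L^2 / (R r₀)^2) +
          (N r₀)^2 * (0 + (0 * (R r₀)^2 - L^2 * (2 * R r₀ ^ 1 * deriv R r₀)) / ((R r₀)^2)^2))) r₀ :=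
    (hX.pow 2).sub ((hNd.pow 2).mul hinv)
  have hχ : HasDerivAt (fun r => ω r - N r / R r)
      (deriv ω r₀ - (deriv N r₀ * R r₀ - N r₀ * deriv R r₀) / (R r₀)^2) r₀ :=
    hωd.sub (hNd.div hRd hR0')
  rw [hf.deriv, hχ.deriv, hcirc]
  have hA : 0 ≤ N r₀ * (deriv ω r₀ * L) * (s + L / R r₀) := by
    have h1 : 0 ≤ deriv ω r₀ * L := by nlinarith
    have h2 : 0 ≤ s + L / R r₀ := by
      have := hsL; rw [neg_div] at this; linarith
    positivity
  have hB : 0 ≤ N r₀ * deriv N r₀ * m^2 := by positivity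
  have key : (1/2) * (2 * (N r₀ * s) ^ 1 * (0 - deriv ω r₀ * L) -
        ((2 * N r₀ ^ 1 * deriv N r₀) * (m^2 + L^2 / (R r₀)^2) +
          (N r₀)^2 * (0 + (0 * (R r₀)^2 - L^2 * (2 * R r₀ ^ 1 * deriv R r₀)) / ((R r₀)^2)^2)))
      = L^2 * (N r₀ / R r₀) * (deriv ω r₀ - (deriv N r₀ * R r₀ - N r₀ * deriv R r₀) / (R r₀)^2)
        - N r₀ * (deriv ω r₀ * L) * (s + L / R r₀) - N r₀ * deriv N r₀ * m^2 := by
    have hm2 : m^2 = s^2 - L^2 / (R r₀)^2 := by linarith [hs2]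
    rw [hm2]
    field_simp
    ring
  rw [key]
  linarith
end

section
/- Let ω, N, R : ℝ → ℝ be differentiable at r₀ and satisfy: N(r₀) > 0, R(r₀) > 0, ω(r₀) > 0, ω'(r₀) < 0, N'(r₀) ≥ 0, R'(r₀) ≥ 0, (d/dr)[ω(r)·R(r)](r₀) < 0, and the ergoregion condition N(r₀) < ω(r₀)·R(r₀). Let m > 0, E < 0, and L ∈ ℝ satisfy the forward-in-time condition E − ω(r₀)L ≥ 0. Define Z²(r) = (E − ω(r)L)² − N(r)²·(m² + L²/R(r)²). If Z²(r₀) = 0, then (Z²)'(r₀) < 0. -/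
set_option maxHeartbeats 1000000


/-- Under the monotonicity conditions and (ωR)' < 0, in the ergoregion,
if Z²(r₀) = 0 then (Z²)'(r₀) < 0. -/
theorem Zsq_zero_implies_deriv_neg
    (ω N R : ℝ → ℝ) (r₀ E L m : ℝ)
    (hω : DifferentiableAt ℝ ω r₀) (hN : DifferentiableAt ℝ N r₀)
    (hR : DifferentiableAt ℝ R r₀)
    (hN0 : 0 < N r₀) (hR0 : 0 < R r₀) (hω0 : 0 < ω r₀)
    (hω' : deriv ω r₀ < 0) (hN' : 0 ≤ deriv N r₀) (hR' : 0 ≤ deriv R r₀)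
    (hωR' : deriv (fun r => ω r * R r) r₀ < 0)
    (hergo : N r₀ < ω r₀ * R r₀)
    (hm : 0 < m) (hE : E < 0) (hX : 0 ≤ E - ω r₀ * L)
    (hZ : (E - ω r₀ * L)^2 - (N r₀)^2 * (m^2 + L^2 / (R r₀)^2) = 0) :
    deriv (fun r => (E - ω r * L)^2 - (N r)^2 * (m^2 + L^2 / (R r)^2)) r₀ < 0 := by
  have hρ : R r₀ ≠ 0 := ne_of_gt hR0
  -- compute the product derivative
  have hprod : deriv (fun r => ω r * R r) r₀ = deriv ω r₀ * R r₀ + ω r₀ * deriv R r₀ :=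
    (hω.hasDerivAt.mul hR.hasDerivAt).deriv
  rw [hprod] at hωR'
  -- build the derivative of the full function
  have hXd : HasDerivAt (fun r => E - ω r * L) (-(deriv ω r₀ * L)) r₀ :=
    (hω.hasDerivAt.mul_const L).const_sub E
  have hX2 := hXd.pow 2
  have hN2 := hN.hasDerivAt.pow 2
  have hR2 := hR.hasDerivAt.pow 2
  have hdiv : HasDerivAt (fun r => L ^ 2 / (R r) ^ 2)
      ((0 * (R r₀) ^ 2 - L ^ 2 * (2 * R r₀ ^ 1 * deriv R r₀)) / ((R r₀) ^ 2) ^ 2) r₀ :=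
    (hasDerivAt_const r₀ (L ^ 2)).div hR2 (pow_ne_zero 2 hρ)
  have hsum := hdiv.const_add (m ^ 2)
  have hmul := hN2.mul hsum
  have hf := hX2.sub hmul
  have hD : deriv (fun r => (E - ω r * L)^2 - (N r)^2 * (m^2 + L^2 / (R r)^2)) r₀ =
      2 * (E - ω r₀ * L) ^ 1 * -(deriv ω r₀ * L) -
      (2 * N r₀ ^ 1 * deriv N r₀ * (m ^ 2 + L ^ 2 / R r₀ ^ 2) +
        N r₀ ^ 2 * ((0 * R r₀ ^ 2 - L ^ 2 * (2 * R r₀ ^ 1 * deriv R r₀)) / (R r₀ ^ 2) ^ 2)) :=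
    hf.deriv
  rw [hD]
  -- abbreviations
  set a := ω r₀ with ha
  set a' := deriv ω r₀ with ha'
  set n := N r₀ with hn
  set n' := deriv N r₀ with hn'
  set ρ := R r₀ with hρ_def
  set ρ' := deriv R r₀ with hρ'
  set X := E - a * L with hXdef
  -- facts
  have hL : L < 0 := by nlinarith
  have hZ' : X ^ 2 * ρ ^ 2 = n ^ 2 * (m ^ 2 * ρ ^ 2 + L ^ 2) := by
    have h2 : X ^ 2 = n ^ 2 * (m ^ 2 + L ^ 2 / ρ ^ 2) := by linarith
    rw [h2]
    field_simp
  have hXpos : 0 < X := by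
    rcases lt_or_eq_of_le hX with h | h
    · exact h
    · exfalso
      have h1 : (0:ℝ) < n ^ 2 * (m ^ 2 * ρ ^ 2 + L ^ 2) := by positivity
      have h2 : X ^ 2 * ρ ^ 2 = 0 := by rw [← h]; ring
      linarith
  have hkey : 0 ≤ X * ρ + n * L := by
    have h1 : 0 < X * ρ - n * L := by nlinarith [mul_pos hXpos hR0, mul_pos hN0 (neg_pos.mpr hL)]
    have h2 : (X * ρ + n * L) * (X * ρ - n * L) = n ^ 2 * m ^ 2 * ρ ^ 2 := by nlinarith [hZ']
    nlinarith [mul_pos (mul_pos (mul_pos hN0 hN0) (mul_pos hm hm)) (mul_pos hR0 hR0)]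
  -- reduce to polynomial inequality multiplied by ρ⁴ > 0
  have hρ4 : (0:ℝ) < ρ ^ 4 := by positivity
  have hpoly : (2 * X ^ 1 * -(a' * L) -
      (2 * n ^ 1 * n' * (m ^ 2 + L ^ 2 / ρ ^ 2) +
        n ^ 2 * ((0 * ρ ^ 2 - L ^ 2 * (2 * ρ ^ 1 * ρ')) / (ρ ^ 2) ^ 2))) * ρ ^ 4 =
      -2 * X * a' * L * ρ ^ 4 - 2 * n * n' * (m ^ 2 * ρ ^ 4 + L ^ 2 * ρ ^ 2)
        + 2 * n ^ 2 * L ^ 2 * ρ' * ρ := by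
    field_simp
    ring
  have hineq : -2 * X * a' * L * ρ ^ 4 - 2 * n * n' * (m ^ 2 * ρ ^ 4 + L ^ 2 * ρ ^ 2)
        + 2 * n ^ 2 * L ^ 2 * ρ' * ρ < 0 := by
    have hXL : 0 < X * (-L) := mul_pos hXpos (neg_pos.mpr hL)
    nlinarith [mul_nonneg hkey (mul_nonneg (mul_nonneg (mul_nonneg hN0.le (neg_nonneg.mpr hL.le)) hR') hR0.le),
      mul_neg_of_neg_of_pos hωR' (mul_pos hXL (mul_pos (mul_pos hR0 hR0) hR0)),
      mul_nonneg (mul_nonneg (sub_nonneg.mpr hergo.le) (mul_nonneg hXL.le hR')) (mul_pos hR0 hR0).le,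
      mul_nonneg (mul_nonneg hN0.le hN') (by positivity : (0:ℝ) ≤ m ^ 2 * ρ ^ 4 + L ^ 2 * ρ ^ 2)]
  have h0 : (2 * X ^ 1 * -(a' * L) -
      (2 * n ^ 1 * n' * (m ^ 2 + L ^ 2 / ρ ^ 2) +
        n ^ 2 * ((0 * ρ ^ 2 - L ^ 2 * (2 * ρ ^ 1 * ρ')) / (ρ ^ 2) ^ 2))) * ρ ^ 4 < 0 := by
    rw [hpoly]; exact hineq
  by_contra hcon
  push_neg at hcon
  exact absurd h0 (not_lt.mpr (mul_nonneg hcon hρ4.le))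
end

section
/- (Main Theorem) Let ω, N, R : ℝ → ℝ be differentiable at r₀ and satisfy: N(r₀) > 0, R(r₀) > 0, ω(r₀) > 0, ω'(r₀) < 0, N'(r₀) ≥ 0, R'(r₀) ≥ 0, (d/dr)[ω(r)·R(r)](r₀) < 0, and the ergoregion condition N(r₀) < ω(r₀)·R(r₀). Let m > 0, E < 0, and L ∈ ℝ satisfy the forward-in-time condition E − ω(r₀)L ≥ 0. Define Z²(r) = (E − ω(r)L)² − N(r)²·(m² + L²/R(r)²). Then there is no circular orbit at r₀, i.e. it is not the case that both Z²(r₀) = 0 and (Z²)'(r₀) = 0. -/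
set_option maxHeartbeats 1600000 in
/-- Main theorem: under the monotonicity conditions and (ωR)' < 0, in the ergoregion
there is no circular orbit with negative energy at r₀. -/
theorem no_circular_negative_energy_orbit
    (ω N R : ℝ → ℝ) (r₀ E L m : ℝ)
    (hω : DifferentiableAt ℝ ω r₀) (hN : DifferentiableAt ℝ N r₀)
    (hR : DifferentiableAt ℝ R r₀)
    (hN0 : 0 < N r₀) (hR0 : 0 < R r₀) (hω0 : 0 < ω r₀)
    (hω' : deriv ω r₀ < 0) (hN' : 0 ≤ deriv N r₀) (hR' : 0 ≤ deriv R r₀)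
    (hωR' : deriv (fun r => ω r * R r) r₀ < 0)
    (hergo : N r₀ < ω r₀ * R r₀)
    (hm : 0 < m) (hE : E < 0) (hX : 0 ≤ E - ω r₀ * L) :
    ¬ ((E - ω r₀ * L)^2 - (N r₀)^2 * (m^2 + L^2 / (R r₀)^2) = 0 ∧
       deriv (fun r => (E - ω r * L)^2 - (N r)^2 * (m^2 + L^2 / (R r)^2)) r₀ = 0) := by
  rintro ⟨hZ, hZ'⟩
  set a := ω r₀ with ha
  set a' := deriv ω r₀ with ha'
  set n := N r₀ with hn
  set n' := deriv N r₀ with hn'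
  set ρ := R r₀ with hρ
  set ρ' := deriv R r₀ with hρ'
  have hρne : ρ ≠ 0 := ne_of_gt hR0
  -- compute the derivative of (ωR) to get a'*ρ + a*ρ' < 0
  have hωRd : deriv (fun r => ω r * R r) r₀ = a' * ρ + a * ρ' := by
    rw [deriv_fun_mul hω hR]
  rw [hωRd] at hωR'
  -- compute the derivative of Z²
  have hX1 : HasDerivAt (fun r => E - ω r * L) (-(a' * L)) r₀ := by
    simpa using (hasDerivAt_const r₀ E).fun_sub (hω.hasDerivAt.mul_const L)
  have hX2 : HasDerivAt (fun r => (E - ω r * L)^2)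
      (2 * (E - a * L) * (-(a' * L))) r₀ := by
    simpa using hX1.fun_pow 2
  have hR2 : HasDerivAt (fun r => (R r)^2) (2 * ρ * ρ') r₀ := by
    simpa [mul_comm, mul_assoc] using hR.hasDerivAt.fun_pow 2
  have hR2ne : (ρ:ℝ)^2 ≠ 0 := pow_ne_zero 2 hρne
  have hdiv : HasDerivAt (fun r => L^2 / (R r)^2)
      ((0 * ρ^2 - L^2 * (2 * ρ * ρ')) / (ρ^2)^2) r₀ :=
    (hasDerivAt_const r₀ (L^2)).div hR2 hR2ne
  have hN2 : HasDerivAt (fun r => (N r)^2) (2 * n * n') r₀ := by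
    simpa [mul_comm, mul_assoc] using hN.hasDerivAt.fun_pow 2
  have hprod : HasDerivAt (fun r => (N r)^2 * (m^2 + L^2 / (R r)^2))
      (2 * n * n' * (m^2 + L^2 / ρ^2)
        + n^2 * ((0 * ρ^2 - L^2 * (2 * ρ * ρ')) / (ρ^2)^2)) r₀ := by
    simpa using hN2.fun_mul ((hasDerivAt_const r₀ (m^2)).fun_add hdiv)
  have htot := hX2.sub hprod
  have hD : deriv (fun r => (E - ω r * L)^2 - (N r)^2 * (m^2 + L^2 / (R r)^2)) r₀
      = 2 * (E - a * L) * (-(a' * L))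
        - (2 * n * n' * (m^2 + L^2 / ρ^2)
          + n^2 * ((0 * ρ^2 - L^2 * (2 * ρ * ρ')) / (ρ^2)^2)) := htot.deriv
  rw [hD] at hZ'
  -- clear denominators
  set X := E - a * L with hXdef
  have hZc : X^2 * ρ^2 = n^2 * (m^2 * ρ^2 + L^2) := by
    field_simp at hZ
    linarith [hZ]
  field_simp at hZ'
  have hZ'c : 2*X*(a'*L)*ρ^3 + 2*n*n'*(m^2*ρ^2 + L^2)*ρ - 2*n^2*L^2*ρ' = 0 :=
    mul_left_cancel₀ (pow_ne_zero 3 hρne) (by linear_combination (-ρ^3) * hZ')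
  -- L < 0
  have hL : L < 0 := by
    by_contra h; push_neg at h
    nlinarith [mul_nonneg hω0.le h]
  have hL2 : 0 < L^2 := by nlinarith
  -- X > 0
  clear hZ hZ' hD htot hX2 hprod hN2 hdiv hR2 hX1 hωRd
  clear_value X a a' n n' ρ ρ'
  have hXpos : 0 < X := by
    rcases hX.lt_or_eq with h|h
    · exact h
    · exfalso
      rw [← h] at hZc
      nlinarith [hZc, mul_pos (mul_pos hN0 hN0)
        (add_pos_of_pos_of_nonneg (mul_pos (mul_pos hm hm) (mul_pos hR0 hR0)) hL2.le)]
  -- X * ρ > -n * L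
  have hXρ : -(n * L) < X * ρ := by
    have h1 : 0 < X * ρ + -(n * L) := by
      have : 0 < -(n*L) := by nlinarith
      nlinarith [mul_nonneg hX hR0.le]
    nlinarith [hZc, h1, mul_pos (mul_pos hN0 hN0)
      (mul_pos (mul_pos hm hm) (mul_pos hR0 hR0))]
  have haL : 0 < a' * L := mul_pos_of_neg_of_neg hω' hL
  -- (ωR)' < 0 and ergoregion give the key sign
  have key : a' * ρ ^ 2 + n * ρ' < 0 := by
    nlinarith [mul_nonneg hR' (sub_pos.2 hergo).le, mul_lt_mul_of_pos_left hωR' hR0]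
  have ht2 : 0 ≤ 2*n*n'*(m^2*ρ^2 + L^2)*ρ :=
    mul_nonneg (mul_nonneg (mul_nonneg (mul_nonneg (by norm_num) hN0.le) hN')
      (by positivity)) hR0.le
  have h13 : 0 < 2*X*(a'*L)*ρ^3 - 2*n^2*L^2*ρ' := by
    have hmul : (-(n*L)) * (a'*L*ρ^2) < (X*ρ) * (a'*L*ρ^2) :=
      mul_lt_mul_of_pos_right hXρ (mul_pos haL (pow_pos hR0 2))
    have hkey2 : 0 < (2*n*L^2) * (-(a'*ρ^2 + n*ρ')) :=
      mul_pos (by positivity) (neg_pos.2 key)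
    nlinarith [hmul, hkey2]
  linarith [hZ'c, ht2, h13]
end

section
/- (Modified Theorem) Let ω, N, R : ℝ → ℝ be differentiable at r₀ with N(r₀) > 0, R(r₀) > 0, ω(r₀) > 0, ω'(r₀) < 0, N'(r₀) ≥ 0, and suppose the function χ(r) = ω(r) − N(r)/R(r) satisfies χ'(r₀) < 0. Let m > 0, E < 0, and L ∈ ℝ satisfy E − ω(r₀)L ≥ 0. Define Z²(r) = (E − ω(r)L)² − N(r)²·(m² + L²/R(r)²). Then it is not the case that both Z²(r₀) = 0 and (Z²)'(r₀) = 0. -/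
set_option maxHeartbeats 1000000

/-- Modified theorem: if χ' < 0 where χ = ω - N/R, there is no circular orbit with
negative energy at r₀. -/
theorem no_circular_orbit_of_chi_decreasing
    (ω N R : ℝ → ℝ) (r₀ E L m : ℝ)
    (hω : DifferentiableAt ℝ ω r₀) (hN : DifferentiableAt ℝ N r₀)
    (hR : DifferentiableAt ℝ R r₀)
    (hN0 : 0 < N r₀) (hR0 : 0 < R r₀) (hω0 : 0 < ω r₀)
    (hω' : deriv ω r₀ < 0) (hN' : 0 ≤ deriv N r₀)
    (hχ' : deriv (fun r => ω r - N r / R r) r₀ < 0)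
    (hm : 0 < m) (hE : E < 0) (hX : 0 ≤ E - ω r₀ * L) :
    ¬ ((E - ω r₀ * L)^2 - (N r₀)^2 * (m^2 + L^2 / (R r₀)^2) = 0 ∧
       deriv (fun r => (E - ω r * L)^2 - (N r)^2 * (m^2 + L^2 / (R r)^2)) r₀ = 0) := by
  rintro ⟨h1, h2⟩
  have hRne : R r₀ ≠ 0 := ne_of_gt hR0
  have hR2ne : (R r₀)^2 ≠ 0 := pow_ne_zero _ hRne
  -- derivative of Z²
  have hA : HasDerivAt (fun r => E - ω r * L) (-(deriv ω r₀ * L)) r₀ :=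
    (hω.hasDerivAt.mul_const L).const_sub E
  have hQ : HasDerivAt (fun r => L^2 / (R r)^2)
      ((0 * (R r₀)^2 - L^2 * (2 * R r₀ ^ 1 * deriv R r₀)) / ((R r₀)^2)^2) r₀ :=
    (hasDerivAt_const r₀ (L^2)).div (hR.hasDerivAt.pow 2) hR2ne
  have hfull := (hA.pow 2).sub ((hN.hasDerivAt.pow 2).mul (hQ.const_add (m^2)))
  have hD2 : deriv (fun r => (E - ω r * L)^2 - (N r)^2 * (m^2 + L^2 / (R r)^2)) r₀ =
      2 * (E - ω r₀ * L) ^ 1 * -(deriv ω r₀ * L) -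
        (2 * N r₀ ^ 1 * deriv N r₀ * (m^2 + L^2 / (R r₀)^2) +
          (N r₀)^2 * ((0 * (R r₀)^2 - L^2 * (2 * R r₀ ^ 1 * deriv R r₀)) / ((R r₀)^2)^2)) :=
    hfull.deriv
  rw [h2] at hD2
  -- derivative of χ
  have hχd : deriv (fun r => ω r - N r / R r) r₀ =
      deriv ω r₀ - (deriv N r₀ * R r₀ - N r₀ * deriv R r₀) / (R r₀)^2 :=
    (hω.hasDerivAt.sub (hN.hasDerivAt.div hR.hasDerivAt hRne)).deriv
  rw [hχd] at hχ'
  set X := E - ω r₀ * L with hXdef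
  set Nv := N r₀; set Rv := R r₀; set W := ω r₀
  set w' := deriv ω r₀; set n' := deriv N r₀; set r' := deriv R r₀
  -- clear denominators
  have hZ : X^2 * Rv^2 = Nv^2 * (m^2 * Rv^2 + L^2) := by
    field_simp at h1
    linear_combination h1
  have hD2' : 0 = -(2 * X * (w' * L) * (Rv ^ 2 * (Rv ^ 2) ^ 2)) -
      (2 * Nv * n' * (m ^ 2 * Rv ^ 2 + L ^ 2) * (Rv ^ 2) ^ 2 +
        -(Nv ^ 2 * (L ^ 2 * (2 * Rv * r')) * Rv ^ 2)) := by
    field_simp at hD2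
    linear_combination Rv^3 * hD2
  clear h1 h2 hD2 hfull hQ hA hχd hω hN hR
  clear_value X Nv Rv W w' n' r'
  have hT : 2 * Rv^3 * (-(Nv * X * w' * L * Rv^3) - n' * X^2 * Rv^3 + Nv^3 * L^2 * r') = 0 := by
    linear_combination (-Nv) * hD2' + (-2 * n' * Rv^4) * hZ
  have hD : -(Nv * X * w' * L * Rv^3) - n' * X^2 * Rv^3 + Nv^3 * L^2 * r' = 0 := by
    have h2Rv : (2 * Rv^3 : ℝ) ≠ 0 := by positivity
    exact (mul_eq_zero.mp hT).resolve_left h2Rv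
  have hχp : w' * Rv^2 - n' * Rv + Nv * r' < 0 := by
    rw [sub_neg, lt_div_iff₀ (pow_pos hR0 2)] at hχ'
    nlinarith [hχ']
  have hL : L < 0 := by
    by_contra h
    push_neg at h
    nlinarith [mul_nonneg hω0.le h]
  have hX2 : 0 < X^2 * Rv^2 := by
    nlinarith [hZ, mul_pos (mul_pos (pow_pos hN0 2) (pow_pos hm 2)) (pow_pos hR0 2),
      sq_nonneg (Nv * L)]
  have hXpos : 0 < X := by
    rcases hX.lt_or_eq with h | h
    · exact h
    · exfalso; rw [← h] at hX2; simp at hX2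
  have hNL : Nv * L < 0 := mul_neg_of_pos_of_neg hN0 hL
  have hXR : 0 < X * Rv := mul_pos hXpos hR0
  have hsum : 0 < X * Rv + Nv * L := by
    nlinarith [hZ, hXR, hNL, mul_pos (mul_pos (pow_pos hN0 2) (pow_pos hm 2)) (pow_pos hR0 2)]
  have hr' : 0 < r' := by
    have hp : 0 < Nv * X * (w' * L) * Rv^3 :=
      mul_pos (mul_pos (mul_pos hN0 hXpos) (mul_pos_of_neg_of_neg hω' hL)) (pow_pos hR0 3)
    have hq : 0 ≤ n' * X^2 * Rv^3 :=
      mul_nonneg (mul_nonneg hN' (sq_nonneg X)) (pow_pos hR0 3).le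
    nlinarith [hD, hp, hq, mul_pos (pow_pos hN0 3) (mul_pos_of_neg_of_neg hL hL)]
  -- key identity
  have key : -(Nv * X * L * Rv) * (w' * Rv^2 - n' * Rv + Nv * r') =
      (X * Rv + Nv * L) * (n' * X * Rv^2 - Nv^2 * L * r') := by
    linear_combination hD
  have hlhs : -(Nv * X * L * Rv) * (w' * Rv^2 - n' * Rv + Nv * r') < 0 := by
    apply mul_neg_of_pos_of_neg _ hχp
    have : 0 < Nv * X * (-L) * Rv :=
      mul_pos (mul_pos (mul_pos hN0 hXpos) (neg_pos.mpr hL)) hR0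
    linarith [this]
  have hrhs : 0 < (X * Rv + Nv * L) * (n' * X * Rv^2 - Nv^2 * L * r') := by
    apply mul_pos hsum
    have h1' : 0 ≤ n' * X * Rv^2 := mul_nonneg (mul_nonneg hN' hXpos.le) (sq_nonneg Rv)
    have h2' : 0 < -(Nv^2 * L * r') := by
      have := mul_pos (mul_pos (pow_pos hN0 2) (neg_pos.mpr hL)) hr'
      linarith [this]
    linarith
  linarith [key, hlhs, hrhs]
end

section
/- Let M > 0, a, Q be real numbers with a² + Q² ≤ M², and let r₊ = M + √(M² − Q² − a²). For every r > r₊, the function N²(r) = (r² − 2Mr + Q² + a²)·r² / (r²·(r² + a²) + (2Mr − Q²)·a²) has positive derivative at r. -/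
/-- The squared lapse N² of the Kerr–Newman metric has positive derivative
outside the horizon. -/
theorem KerrNewman_Nsq_deriv_pos
    (M a Q : ℝ) (hM : 0 < M) (h : a^2 + Q^2 ≤ M^2)
    (r : ℝ) (hr : M + Real.sqrt (M^2 - Q^2 - a^2) < r) :
    0 < deriv (fun s => (s^2 - 2*M*s + Q^2 + a^2) * s^2 /
        (s^2 * (s^2 + a^2) + (2*M*s - Q^2) * a^2)) r := by
  -- basic inequalities
  have hsq : 0 ≤ Real.sqrt (M^2 - Q^2 - a^2) := Real.sqrt_nonneg _
  have hrM : M < r := by linarith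
  have hr0 : 0 < r := lt_trans hM hrM
  have hΔ : 0 < r^2 - 2*M*r + Q^2 + a^2 := by
    have h1 : Real.sqrt (M^2 - Q^2 - a^2) < r - M := by linarith
    have h2 : M^2 - Q^2 - a^2 < (r - M)^2 := by
      calc M^2 - Q^2 - a^2 = Real.sqrt (M^2 - Q^2 - a^2) ^ 2 := by
            rw [Real.sq_sqrt (by linarith : (0:ℝ) ≤ M^2 - Q^2 - a^2)]
        _ < (r - M)^2 := by
            apply pow_lt_pow_left₀ h1 hsq
            · norm_num
    nlinarith
  have hMr : 0 < 2*M*r - Q^2 := by nlinarith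
  have hr2 : a^2 + Q^2 < r^2 := by nlinarith
  have hD : 0 < r^2 * (r^2 + a^2) + (2*M*r - Q^2) * a^2 := by nlinarith [sq_nonneg a, sq_nonneg r]
  -- derivatives
  have hNum : HasDerivAt (fun s : ℝ => (s^2 - 2*M*s + Q^2 + a^2) * s^2)
      ((2*r - 2*M) * r^2 + (r^2 - 2*M*r + Q^2 + a^2) * (2*r)) r := by
    have hA : HasDerivAt (fun s : ℝ => s^2 - 2*M*s + Q^2 + a^2) (2*r - 2*M) r := by
      have h1 : HasDerivAt (fun s : ℝ => s^2) (2*r) r := by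
        simpa using hasDerivAt_pow 2 r
      have h2 : HasDerivAt (fun s : ℝ => 2*M*s) (2*M) r := by
        simpa using (hasDerivAt_id r).const_mul (2*M)
      simpa using (((h1.sub h2).add_const (Q^2)).add_const (a^2))
    have hB : HasDerivAt (fun s : ℝ => s^2) (2*r) r := by
      simpa using hasDerivAt_pow 2 r
    exact hA.mul hB
  have hDen : HasDerivAt (fun s : ℝ => s^2 * (s^2 + a^2) + (2*M*s - Q^2) * a^2)
      ((2*r) * (r^2 + a^2) + r^2 * (2*r) + (2*M) * a^2) r := by
    have h1 : HasDerivAt (fun s : ℝ => s^2) (2*r) r := by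
      simpa using hasDerivAt_pow 2 r
    have h2 : HasDerivAt (fun s : ℝ => s^2 + a^2) (2*r) r := h1.add_const _
    have h3 : HasDerivAt (fun s : ℝ => s^2 * (s^2 + a^2)) ((2*r) * (r^2 + a^2) + r^2 * (2*r)) r :=
      h1.mul h2
    have h4 : HasDerivAt (fun s : ℝ => (2*M*s - Q^2) * a^2) ((2*M) * a^2) r := by
      have h5 : HasDerivAt (fun s : ℝ => 2*M*s - Q^2) (2*M) r := by
        simpa using ((hasDerivAt_id r).const_mul (2*M)).sub_const (Q^2)
      simpa using h5.mul_const (a^2)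
    exact h3.add h4
  have hf := hNum.div hDen (ne_of_gt hD)
  rw [HasDerivAt.deriv (f := fun s => (s^2 - 2*M*s + Q^2 + a^2) * s^2 /
      (s^2 * (s^2 + a^2) + (2*M*s - Q^2) * a^2)) hf]
  apply div_pos
  · -- numerator positivity via explicit decomposition
    have key : ((2*r - 2*M) * r^2 + (r^2 - 2*M*r + Q^2 + a^2) * (2*r)) *
          (r^2 * (r^2 + a^2) + (2*M*r - Q^2) * a^2) -
          (r^2 - 2*M*r + Q^2 + a^2) * r^2 *
          ((2*r) * (r^2 + a^2) + r^2 * (2*r) + (2*M) * a^2)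
        = 2*r*((M*r - Q^2 - a^2)*r^4 + a^4*r*(r - M) + a^2*r^2*(r^2 - Q^2 - a^2)
            + a^2*(2*M*r - Q^2)*(r^2 - 2*M*r + Q^2 + a^2)) := by ring
    rw [key]
    have t1 : 0 < (M*r - Q^2 - a^2)*r^4 := by
      apply mul_pos _ (pow_pos hr0 4)
      nlinarith
    have t2 : 0 ≤ a^4*r*(r - M) :=
      mul_nonneg (mul_nonneg (by positivity) hr0.le) (by linarith)
    have t3 : 0 ≤ a^2*r^2*(r^2 - Q^2 - a^2) :=
      mul_nonneg (by positivity) (by linarith)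
    have t4 : 0 ≤ a^2*(2*M*r - Q^2)*(r^2 - 2*M*r + Q^2 + a^2) :=
      mul_nonneg (mul_nonneg (sq_nonneg a) hMr.le) hΔ.le
    nlinarith
  · positivity
end

section
/- Let M > 0, a > 0, Q be real numbers with a² + Q² ≤ M², and let r₊ = M + √(M² − Q² − a²). For every r > r₊, the frame-dragging function ω(r) = a·(2Mr − Q²) / (r²·(r² + a²) + (2Mr − Q²)·a²) has negative derivative at r. -/
/-- The frame-dragging function ω of the Kerr–Newman metric has negative derivative
outside the horizon. -/
theorem KerrNewman_omega_deriv_neg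
    (M a Q : ℝ) (hM : 0 < M) (ha : 0 < a) (h : a^2 + Q^2 ≤ M^2)
    (r : ℝ) (hr : M + Real.sqrt (M^2 - Q^2 - a^2) < r) :
    deriv (fun s => a * (2*M*s - Q^2) /
        (s^2 * (s^2 + a^2) + (2*M*s - Q^2) * a^2)) r < 0 := by
  have hMr : M < r := lt_of_le_of_lt (le_add_of_nonneg_right (Real.sqrt_nonneg _)) hr
  have hQ : Q^2 ≤ M^2 := by nlinarith [sq_nonneg a]
  have hrpos : 0 < r := hM.trans hMr
  have hMM : M^2 < M*r := by nlinarith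
  have hPpos : 0 < 2*M*r - Q^2 := by nlinarith
  have hDpos : 0 < r^2 * (r^2 + a^2) + (2*M*r - Q^2) * a^2 := by positivity
  have hDne : r^2 * (r^2 + a^2) + (2*M*r - Q^2) * a^2 ≠ 0 := ne_of_gt hDpos
  have hN : HasDerivAt (fun s : ℝ => a * (2*M*s - Q^2)) (a * (2*M)) r := by
    have : HasDerivAt (fun s : ℝ => 2*M*s - Q^2) (2*M) r := by
      simpa using ((hasDerivAt_id r).const_mul (2*M)).sub_const (Q^2)
    simpa using this.const_mul a
  have hD : HasDerivAt (fun s : ℝ => s^2 * (s^2 + a^2) + (2*M*s - Q^2) * a^2)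
      (2*r*(r^2 + a^2) + r^2*(2*r) + 2*M*a^2) r := by
    have h1 : HasDerivAt (fun s : ℝ => s^2) (2*r) r := by
      simpa using hasDerivAt_pow 2 r
    have h2 : HasDerivAt (fun s : ℝ => s^2 + a^2) (2*r) r := h1.add_const _
    have h3 : HasDerivAt (fun s : ℝ => s^2 * (s^2 + a^2))
        (2*r*(r^2 + a^2) + r^2*(2*r)) r := h1.mul h2
    have h4 : HasDerivAt (fun s : ℝ => (2*M*s - Q^2) * a^2) (2*M*a^2) r := by
      have : HasDerivAt (fun s : ℝ => 2*M*s - Q^2) (2*M) r := by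
        simpa using ((hasDerivAt_id r).const_mul (2*M)).sub_const (Q^2)
      simpa [mul_comm, mul_assoc] using this.mul_const (a^2)
    exact h3.add h4
  have hdiv := hN.div hD hDne
  rw [(show HasDerivAt (fun s : ℝ => a * (2*M*s - Q^2) / (s^2 * (s^2 + a^2) + (2*M*s - Q^2) * a^2)) _ r from hdiv).deriv]
  apply div_neg_of_neg_of_pos
  · have h1 : Q^2 * r^2 < M*r * r^2 :=
      lt_of_le_of_lt (mul_le_mul_of_nonneg_right hQ (sq_nonneg r))
        (mul_lt_mul_of_pos_right hMM (by positivity))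
    have h2 : a^2 * Q^2 < a^2 * (M*r) :=
      mul_lt_mul_of_pos_left (lt_of_le_of_lt hQ hMM) (by positivity)
    nlinarith [mul_pos ha hrpos, mul_pos (mul_pos ha hrpos) (mul_pos hM (mul_pos hrpos hrpos)),
      mul_pos ha (mul_pos hM (mul_pos hrpos (mul_pos hrpos hrpos)))]
  · positivity
end

section
/- Let M > 0, a > 0, Q be real numbers with a² + Q² ≤ M², and let r₊ = M + √(M² − Q² − a²). For every r > r₊, the function ω(r)·R(r) = a·P(r)/R(r), where P(r) = 2M/r − Q²/r² and R(r) = √(r² + a² + (2Mr − Q²)·a²/r²), has negative derivative at r. -/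
/-- The function ωR = aP/R of the Kerr–Newman metric has negative derivative
outside the horizon. -/
theorem KerrNewman_omegaR_deriv_neg
    (M a Q : ℝ) (hM : 0 < M) (ha : 0 < a) (h : a^2 + Q^2 ≤ M^2)
    (r : ℝ) (hr : M + Real.sqrt (M^2 - Q^2 - a^2) < r) :
    deriv (fun s => a * (2*M/s - Q^2/s^2) /
        Real.sqrt (s^2 + a^2 + (2*M*s - Q^2) * a^2 / s^2)) r < 0 := by
  have hsq0 := Real.sqrt_nonneg (M^2 - Q^2 - a^2)
  have hMr : M < r := by linarith
  have hr0 : 0 < r := hM.trans hMr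
  have hne : (r:ℝ) ≠ 0 := hr0.ne'
  have hQ2 : Q^2 ≤ M^2 := by nlinarith [sq_nonneg a]
  have har : a < r := by nlinarith
  have hPm : Q^2 < M*r := by nlinarith
  have h2MrQ : 0 < 2*M*r - Q^2 := by nlinarith
  have hSpos : 0 < r^2 + a^2 + (2*M*r - Q^2)*a^2/r^2 := by positivity
  set S : ℝ := r^2 + a^2 + (2*M*r - Q^2)*a^2/r^2 with hSdef
  have hsq : 0 < Real.sqrt S := Real.sqrt_pos.mpr hSpos
  -- derivative of the inner function of sqrt
  have hN : HasDerivAt (fun s : ℝ => s^2 + a^2 + (2*M*s - Q^2)*a^2/s^2)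
      (2*r + (2*a^2*Q^2 - 2*M*a^2*r)/r^3) r := by
    have h1 : HasDerivAt (fun s : ℝ => (2*M*s - Q^2)*a^2) (2*M*a^2) r := by
      have := (((hasDerivAt_id r).const_mul (2*M)).sub_const (Q^2)).mul_const (a^2)
      simpa using this
    have h2 : HasDerivAt (fun s : ℝ => s^2) (2*r) r := by
      simpa using hasDerivAt_pow 2 r
    have h3 := h1.div h2 (pow_ne_zero 2 hne)
    have h4 : HasDerivAt (fun s : ℝ => s^2 + a^2 + (2*M*s - Q^2)*a^2/s^2) _ r := ((hasDerivAt_pow 2 r).add_const (a^2)).add h3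
    convert h4 using 1
    field_simp
    ring
  have hV : HasDerivAt (fun s : ℝ => Real.sqrt (s^2 + a^2 + (2*M*s - Q^2)*a^2/s^2))
      ((2*r + (2*a^2*Q^2 - 2*M*a^2*r)/r^3) / (2*Real.sqrt S)) r :=
    hN.sqrt hSpos.ne'
  -- derivative of the numerator
  have hU : HasDerivAt (fun s : ℝ => a * (2*M/s - Q^2/s^2))
      (a * ((2*Q^2 - 2*M*r)/r^3)) r := by
    have d1 : HasDerivAt (fun s : ℝ => 2*M/s) ((0*r - 2*M*1)/r^2) r :=
      (hasDerivAt_const r (2*M)).div (hasDerivAt_id r) hne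
    have d2 : HasDerivAt (fun s : ℝ => Q^2/s^2) ((0*r^2 - Q^2*(2*r))/(r^2)^2) r := by
      have : HasDerivAt (fun s : ℝ => Q^2/s^2) _ r := (hasDerivAt_const r (Q^2)).div
        (by simpa using hasDerivAt_pow 2 r : HasDerivAt (fun s : ℝ => s^2) (2*r) r)
        (pow_ne_zero 2 hne)
      simpa using this
    have : HasDerivAt (fun s : ℝ => a * (2*M/s - Q^2/s^2)) _ r := (d1.sub d2).const_mul a
    convert this using 1
    field_simp
    ring
  have hF : HasDerivAt (fun s => a * (2*M/s - Q^2/s^2) /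
      Real.sqrt (s^2 + a^2 + (2*M*s - Q^2) * a^2 / s^2))
      ((a * ((2*Q^2 - 2*M*r)/r^3) * Real.sqrt S
        - a * (2*M/r - Q^2/r^2) * ((2*r + (2*a^2*Q^2 - 2*M*a^2*r)/r^3) / (2*Real.sqrt S)))
        / (Real.sqrt S)^2) r := hU.div hV hsq.ne'
  rw [hF.deriv]
  apply div_neg_of_neg_of_pos _ (pow_pos hsq 2)
  have hA : a * ((2*Q^2 - 2*M*r)/r^3) < 0 := by
    apply mul_neg_of_pos_of_neg ha
    apply div_neg_of_neg_of_pos (by nlinarith) (by positivity)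
  have hB : 0 < a * (2*M/r - Q^2/r^2) := by
    apply mul_pos ha
    have heq : 2*M/r - Q^2/r^2 = (2*M*r - Q^2)/r^2 := by field_simp
    rw [heq]
    exact div_pos h2MrQ (by positivity)
  have hC : 0 < 2*r + (2*a^2*Q^2 - 2*M*a^2*r)/r^3 := by
    have heq : 2*r + (2*a^2*Q^2 - 2*M*a^2*r)/r^3 = (2*r^4 + 2*a^2*Q^2 - 2*M*a^2*r)/r^3 := by
      field_simp; ring
    rw [heq]
    have ha2 : a^2 < r^2 := by nlinarith
    have hkey : M*a^2*r < r^4 := by nlinarith [mul_pos hr0 hr0, mul_pos (mul_pos hr0 hr0) hr0]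
    apply div_pos (by nlinarith [sq_nonneg (a*Q)]) (by positivity)
  have t1 : a * ((2*Q^2 - 2*M*r)/r^3) * Real.sqrt S < 0 := mul_neg_of_neg_of_pos hA hsq
  have t2 : 0 < a * (2*M/r - Q^2/r^2) *
      ((2*r + (2*a^2*Q^2 - 2*M*a^2*r)/r^3) / (2*Real.sqrt S)) :=
    mul_pos hB (div_pos hC (by positivity))
  linarith
end

section
/- (No circular negative-energy orbits for Kerr–Newman) Let M > 0, a > 0, Q be real numbers with a² + Q² ≤ M², let r₊ = M + √(M² − Q² − a²), and define for r > 0: R(r) = √(r² + a² + (2Mr − Q²)·a²/r²), N(r) = √((r² − 2Mr + Q² + a²))/R(r) (taking the positive square root for r > r₊), and ω(r) = a·(2Mr − Q²)/(R(r)²·r²). Let r₀ > r₊ lie in the ergoregion, i.e. N(r₀) < ω(r₀)·R(r₀). Let m > 0, E < 0, and L ∈ ℝ satisfy E − ω(r₀)L ≥ 0, and define Z²(r) = (E − ω(r)L)² − N(r)²·(m² + L²/R(r)²). Then it is not the case that both Z²(r₀) = 0 and (Z²)'(r₀) = 0. -/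
/-- The function R(r) of the Kerr–Newman metric in the equatorial plane. -/
noncomputable def KN_R (M a Q r : ℝ) : ℝ :=
  Real.sqrt (r^2 + a^2 + (2*M*r - Q^2) * a^2 / r^2)

/-- The lapse function N(r) of the Kerr–Newman metric in the equatorial plane. -/
noncomputable def KN_N (M a Q r : ℝ) : ℝ :=
  Real.sqrt (r^2 - 2*M*r + Q^2 + a^2) / KN_R M a Q r

/-- The frame-dragging function ω(r) of the Kerr–Newman metric in the equatorial plane. -/
noncomputable def KN_ω (M a Q r : ℝ) : ℝ :=
  a * (2*M*r - Q^2) / ((KN_R M a Q r)^2 * r^2)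

/-- Abstract polynomial contradiction at the heart of the theorem. -/
lemma KN_aux (a r Δ c m E A B : ℝ) (ha : 0 < a) (hr : 0 < r) (hm : 0 < m)
    (hE : E < 0) (hΔ : 0 < Δ) (hΔa : Δ < a^2) (hc : 0 < c)
    (hF1 : A^2 - Δ*(m^2*r^2 + B^2) = 0)
    (hF2 : 4*E*r*A - (c*(m^2*r^2 + B^2) + Δ*(2*m^2*r)) = 0)
    (hF3 : 0 ≤ (r^2+a^2)*A + a*Δ*B) : False := by
  rcases le_or_gt 0 A with hA | hA
  · -- A ≥ 0 : derivative condition is impossible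
    have hq : Δ*(m^2*r^2 + B^2) = A^2 := by linarith
    have e2 : 4*E*r*A*Δ - c*A^2 - 2*Δ^2*m^2*r = 0 := by
      linear_combination Δ * hF2 + c * hq
    nlinarith [e2, mul_nonneg (mul_nonneg (mul_nonneg hΔ.le hr.le) hA)
        (neg_nonneg.mpr hE.le), mul_nonneg hc.le (sq_nonneg A),
      mul_pos (mul_pos (pow_pos hΔ 2) (pow_pos hm 2)) hr]
  · -- A < 0 : forward-in-time + ergoregion is impossible
    have hB : 0 < B := by
      by_contra hB
      push_neg at hB
      have h1 : a*Δ*B ≤ 0 :=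
        mul_nonpos_of_nonneg_of_nonpos (by positivity) hB
      have h2 : (r^2+a^2)*A < 0 :=
        mul_neg_of_pos_of_neg (by positivity) hA
      linarith
    have hA2B : Δ*B^2 ≤ A^2 := by
      nlinarith [mul_nonneg hΔ.le (mul_nonneg (sq_nonneg m) (sq_nonneg r))]
    have h1 : (r^2+a^2)*(-A) ≤ a*Δ*B := by linarith
    have h1n : 0 ≤ (r^2+a^2)*(-A) := mul_nonneg (by positivity) (by linarith)
    have h2 : ((r^2+a^2)*(-A))^2 ≤ (a*Δ*B)^2 := by nlinarith
    have h3 : 0 < (r^2+a^2)^2 - a^2*Δ := by nlinarith [pow_pos hr 2, pow_pos ha 2]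
    have h4 : 0 < ((r^2+a^2)^2 - a^2*Δ) * (Δ*B^2) :=
      mul_pos h3 (mul_pos hΔ (pow_pos hB 2))
    nlinarith [h2, h4, mul_le_mul_of_nonneg_left hA2B (sq_nonneg (r^2+a^2))]

set_option maxHeartbeats 1600000 in
/-- No circular negative-energy orbits in the ergoregion of the Kerr–Newman metric. -/
theorem KerrNewman_no_circular_negative_energy_orbit
    (M a Q : ℝ) (hM : 0 < M) (ha : 0 < a) (h : a^2 + Q^2 ≤ M^2)
    (r₀ : ℝ) (hr : M + Real.sqrt (M^2 - Q^2 - a^2) < r₀)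
    (hergo : KN_N M a Q r₀ < KN_ω M a Q r₀ * KN_R M a Q r₀)
    (m E L : ℝ) (hm : 0 < m) (hE : E < 0) (hX : 0 ≤ E - KN_ω M a Q r₀ * L) :
    ¬ ((E - KN_ω M a Q r₀ * L)^2
          - (KN_N M a Q r₀)^2 * (m^2 + L^2 / (KN_R M a Q r₀)^2) = 0 ∧
       deriv (fun r => (E - KN_ω M a Q r * L)^2
          - (KN_N M a Q r)^2 * (m^2 + L^2 / (KN_R M a Q r)^2)) r₀ = 0) := by
  rintro ⟨hZ, hdZ⟩
  have hs0 : 0 ≤ Real.sqrt (M^2 - Q^2 - a^2) := Real.sqrt_nonneg _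
  have hs2 : (Real.sqrt (M^2 - Q^2 - a^2))^2 = M^2 - Q^2 - a^2 :=
    Real.sq_sqrt (by nlinarith)
  have hQ2 : Q^2 < M^2 := by nlinarith
  -- basic facts at any r beyond the horizon
  have fact : ∀ r : ℝ, M + Real.sqrt (M^2 - Q^2 - a^2) < r →
      0 < r ∧ M < r ∧ 0 < r^2 - 2*M*r + Q^2 + a^2 ∧ 0 < 2*M*r - Q^2 ∧
      0 < (r^2+a^2)^2 - (r^2-2*M*r+Q^2+a^2)*a^2 ∧
      (KN_R M a Q r)^2 = ((r^2+a^2)^2 - (r^2-2*M*r+Q^2+a^2)*a^2) / r^2 ∧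
      0 < KN_R M a Q r ∧
      (KN_N M a Q r)^2 = (r^2-2*M*r+Q^2+a^2) * r^2
          / ((r^2+a^2)^2 - (r^2-2*M*r+Q^2+a^2)*a^2) ∧
      KN_ω M a Q r = a*(2*M*r-Q^2)
          / ((r^2+a^2)^2 - (r^2-2*M*r+Q^2+a^2)*a^2) := by
    intro r hrr
    have hrM : M < r := lt_of_le_of_lt (le_add_of_nonneg_right hs0) hrr
    have hr0 : 0 < r := hM.trans hrM
    have hΔ : 0 < r^2 - 2*M*r + Q^2 + a^2 := by
      have h1 : 0 < r - M - Real.sqrt (M^2 - Q^2 - a^2) := by linarith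
      have h2 : 0 < (r - M - Real.sqrt (M^2 - Q^2 - a^2))
          * (r - M + Real.sqrt (M^2 - Q^2 - a^2)) := mul_pos h1 (by linarith)
      nlinarith [hs2, h2]
    have hw : 0 < 2*M*r - Q^2 := by nlinarith [mul_lt_mul_of_pos_left hrM hM]
    have hS : 0 < (r^2+a^2)^2 - (r^2-2*M*r+Q^2+a^2)*a^2 := by
      have hrw : (r^2+a^2)^2 - (r^2-2*M*r+Q^2+a^2)*a^2
          = r^4 + a^2*r^2 + (2*M*r - Q^2)*a^2 := by ring
      rw [hrw]
      have := mul_pos hw (mul_pos ha ha)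
      nlinarith [pow_pos hr0 4, sq_nonneg (a*r)]
    have hinner : r^2 + a^2 + (2*M*r - Q^2) * a^2 / r^2
        = ((r^2+a^2)^2 - (r^2-2*M*r+Q^2+a^2)*a^2) / r^2 := by
      field_simp
      ring
    have hinnerpos : 0 < r^2 + a^2 + (2*M*r - Q^2) * a^2 / r^2 := by
      rw [hinner]; positivity
    have hR2 : (KN_R M a Q r)^2
        = ((r^2+a^2)^2 - (r^2-2*M*r+Q^2+a^2)*a^2) / r^2 := by
      rw [KN_R, Real.sq_sqrt hinnerpos.le]; exact hinner
    have hRpos : 0 < KN_R M a Q r := Real.sqrt_pos.mpr hinnerpos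
    have hN2 : (KN_N M a Q r)^2 = (r^2-2*M*r+Q^2+a^2) * r^2
        / ((r^2+a^2)^2 - (r^2-2*M*r+Q^2+a^2)*a^2) := by
      rw [KN_N, div_pow, Real.sq_sqrt hΔ.le, hR2]
      rw [div_div_eq_mul_div]
    have hω : KN_ω M a Q r = a*(2*M*r-Q^2)
        / ((r^2+a^2)^2 - (r^2-2*M*r+Q^2+a^2)*a^2) := by
      rw [KN_ω, hR2, div_mul_cancel₀ _ (pow_ne_zero 2 hr0.ne')]
    exact ⟨hr0, hrM, hΔ, hw, hS, hR2, hRpos, hN2, hω⟩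
  obtain ⟨hr0, hrM, hΔ, hw, hS, hR2, hRpos, hN2, hω⟩ := fact r₀ hr
  -- the function agrees with P/S beyond the horizon
  have feq : ∀ r ∈ Set.Ioi (M + Real.sqrt (M^2 - Q^2 - a^2)),
      (E - KN_ω M a Q r * L)^2
          - (KN_N M a Q r)^2 * (m^2 + L^2 / (KN_R M a Q r)^2)
      = ((E*(r^2+a^2) - a*L)^2
          - (r^2-2*M*r+Q^2+a^2)*(m^2*r^2 + (L-a*E)^2))
        / ((r^2+a^2)^2 - (r^2-2*M*r+Q^2+a^2)*a^2) := by
    intro r hrr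
    obtain ⟨hr0', hrM', hΔ', hw', hS', hR2', hRpos', hN2', hω'⟩ := fact r hrr
    rw [hω', hN2', hR2']
    generalize hSg : (r^2+a^2)^2 - (r^2-2*M*r+Q^2+a^2)*a^2 = S at hS' ⊢
    field_simp
    subst hSg
    ring
  -- Z² = 0  ⇒  P(r₀) = 0
  rw [feq r₀ hr] at hZ
  have hP0 : (E*(r₀^2+a^2) - a*L)^2
      - (r₀^2-2*M*r₀+Q^2+a^2)*(m^2*r₀^2 + (L-a*E)^2) = 0 :=
    (div_eq_zero_iff.mp hZ).resolve_right hS.ne'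
  -- derivative transfer to the rational function
  have hsq' : ∀ x : ℝ, HasDerivAt (fun r : ℝ => r^2) (2*x) x := fun x => by
    simpa using hasDerivAt_pow 2 x
  have hAd : HasDerivAt (fun r : ℝ => E*(r^2+a^2) - a*L) (E*(2*r₀)) r₀ :=
    (((hsq' r₀).add_const (a^2)).const_mul E).sub_const (a*L)
  have hΔd : HasDerivAt (fun r : ℝ => r^2 - 2*M*r + Q^2 + a^2)
      (2*r₀ - 2*M) r₀ := by
    have h1 : HasDerivAt (fun r : ℝ => 2*M*r) (2*M) r₀ := by
      simpa using (hasDerivAt_id r₀).const_mul (2*M)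
    simpa using (((hsq' r₀).sub h1).add_const (Q^2)).add_const (a^2)
  have hqd : HasDerivAt (fun r : ℝ => m^2*r^2 + (L-a*E)^2) (m^2*(2*r₀)) r₀ :=
    ((hsq' r₀).const_mul (m^2)).add_const ((L-a*E)^2)
  have hPd : HasDerivAt (fun r : ℝ => (E*(r^2+a^2) - a*L)^2
      - (r^2-2*M*r+Q^2+a^2)*(m^2*r^2 + (L-a*E)^2))
      (4*E*r₀*(E*(r₀^2+a^2) - a*L) - ((2*r₀-2*M)*(m^2*r₀^2 + (L-a*E)^2)
        + (r₀^2-2*M*r₀+Q^2+a^2)*(2*m^2*r₀))) r₀ := by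
    have h1 := (hAd.pow 2).sub (hΔd.mul hqd)
    refine h1.congr_deriv ?_
    push_cast
    ring
  have hSd : HasDerivAt (fun r : ℝ => (r^2+a^2)^2 - (r^2-2*M*r+Q^2+a^2)*a^2)
      (2*(r₀^2+a^2)*(2*r₀) - (2*r₀-2*M)*a^2) r₀ := by
    have h1 := (((hsq' r₀).add_const (a^2)).pow 2).sub (hΔd.mul_const (a^2))
    refine h1.congr_deriv ?_
    push_cast
    ring
  have hgd := hPd.div hSd hS.ne'
  simp only [Pi.div_def] at hgd
  have heq : (fun r => (E - KN_ω M a Q r * L)^2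
          - (KN_N M a Q r)^2 * (m^2 + L^2 / (KN_R M a Q r)^2))
      =ᶠ[nhds r₀] (fun r => ((E*(r^2+a^2) - a*L)^2
          - (r^2-2*M*r+Q^2+a^2)*(m^2*r^2 + (L-a*E)^2))
        / ((r^2+a^2)^2 - (r^2-2*M*r+Q^2+a^2)*a^2)) :=
    Filter.eventuallyEq_of_mem (Ioi_mem_nhds hr) feq
  rw [heq.deriv_eq, hgd.deriv] at hdZ
  have hnum := (div_eq_zero_iff.mp hdZ).resolve_right (pow_ne_zero 2 hS.ne')
  have hdP : (4*E*r₀*(E*(r₀^2+a^2) - a*L) - ((2*r₀-2*M)*(m^2*r₀^2 + (L-a*E)^2)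
      + (r₀^2-2*M*r₀+Q^2+a^2)*(2*m^2*r₀)))
      * ((r₀^2+a^2)^2 - (r₀^2-2*M*r₀+Q^2+a^2)*a^2) = 0 := by
    linear_combination hnum
      + (2*(r₀^2+a^2)*(2*r₀) - (2*r₀-2*M)*a^2) * hP0
  have hF2 : 4*E*r₀*(E*(r₀^2+a^2) - a*L) - ((2*r₀-2*M)*(m^2*r₀^2 + (L-a*E)^2)
      + (r₀^2-2*M*r₀+Q^2+a^2)*(2*m^2*r₀)) = 0 :=
    (mul_eq_zero.mp hdP).resolve_right hS.ne'
  -- ergoregion condition  ⇒  Δ < a²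
  have hN0 : 0 ≤ KN_N M a Q r₀ := by
    rw [KN_N]; exact div_nonneg (Real.sqrt_nonneg _) hRpos.le
  have hsq2 : (KN_N M a Q r₀)^2 < (KN_ω M a Q r₀)^2 * (KN_R M a Q r₀)^2 := by
    nlinarith [hergo, hN0]
  rw [hN2, hω, hR2] at hsq2
  have h6 : (r₀^2-2*M*r₀+Q^2+a^2)*r₀^4 < a^2*(2*M*r₀-Q^2)^2 := by
    have h7 := mul_lt_mul_of_pos_right hsq2 (mul_pos hS (pow_pos hr0 2))
    have e1 : (r₀^2-2*M*r₀+Q^2+a^2)*r₀^2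
        / ((r₀^2+a^2)^2 - (r₀^2-2*M*r₀+Q^2+a^2)*a^2)
        * (((r₀^2+a^2)^2 - (r₀^2-2*M*r₀+Q^2+a^2)*a^2)*r₀^2)
        = (r₀^2-2*M*r₀+Q^2+a^2)*r₀^4 := by
      generalize hSg : (r₀^2+a^2)^2 - (r₀^2-2*M*r₀+Q^2+a^2)*a^2 = S at hS ⊢
      field_simp
    have e2 : (a*(2*M*r₀-Q^2)
        / ((r₀^2+a^2)^2 - (r₀^2-2*M*r₀+Q^2+a^2)*a^2))^2
        * (((r₀^2+a^2)^2 - (r₀^2-2*M*r₀+Q^2+a^2)*a^2)/r₀^2)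
        * (((r₀^2+a^2)^2 - (r₀^2-2*M*r₀+Q^2+a^2)*a^2)*r₀^2)
        = a^2*(2*M*r₀-Q^2)^2 := by
      generalize hSg : (r₀^2+a^2)^2 - (r₀^2-2*M*r₀+Q^2+a^2)*a^2 = S at hS ⊢
      field_simp
    rw [e1, e2] at h7
    exact h7
  have hΔa : r₀^2-2*M*r₀+Q^2+a^2 < a^2 := by
    by_contra hcon
    push_neg at hcon
    have hwr : 2*M*r₀ - Q^2 ≤ r₀^2 := by linarith
    have hw2 : (2*M*r₀ - Q^2)^2 ≤ r₀^4 := by nlinarith [hw, hwr]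
    nlinarith [h6, mul_le_mul_of_nonneg_left hw2 (sq_nonneg a),
      mul_le_mul_of_nonneg_right hcon (pow_nonneg hr0.le 4)]
  -- forward-in-time condition
  rw [hω] at hX
  have hXS := mul_nonneg hX hS.le
  have eX : (E - a*(2*M*r₀-Q^2)
        / ((r₀^2+a^2)^2 - (r₀^2-2*M*r₀+Q^2+a^2)*a^2) * L)
      * ((r₀^2+a^2)^2 - (r₀^2-2*M*r₀+Q^2+a^2)*a^2)
      = (r₀^2+a^2)*(E*(r₀^2+a^2) - a*L)
        + a*(r₀^2-2*M*r₀+Q^2+a^2)*(L-a*E) := by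
    generalize hSg : (r₀^2+a^2)^2 - (r₀^2-2*M*r₀+Q^2+a^2)*a^2 = S at hS ⊢
    field_simp
    subst hSg
    ring
  rw [eX] at hXS
  exact KN_aux a r₀ (r₀^2-2*M*r₀+Q^2+a^2) (2*r₀-2*M) m E
    (E*(r₀^2+a^2) - a*L) (L-a*E) ha hr0 hm hE hΔ hΔa (by linarith)
    hP0 hF2 hXS
end
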